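/- arXiv:1811.12544 — 2 statements merged into one kernel-verified Lean document; each statement's English description precedes it below -/
import Mathlib

section
/- Let p be a prime with p ≡ 3 (mod 4) and let d ∈ F_p with d ≠ 0 and d ≠ 1, and suppose the supersingularity condition Σ_{j=0}^{(p−1)/2} binom((p−1)/2, j)² · d^j = 0 holds in F_p. Then the Edwards curves with coefficients d and d^{−1} have the same number of affine points: N_d = N_{d^{−1}}. -/
open Finset

/-- The number of affine points of the Edwards curve `x² + y² = 1 + d x² y²` over `ZMod p`. -/
noncomputable def edwardsCard (p : ℕ) (d : ZMod p) : ℕ :=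
  Nat.card {xy : ZMod p × ZMod p // xy.1 ^ 2 + xy.2 ^ 2 = 1 + d * xy.1 ^ 2 * xy.2 ^ 2}

section Aux

variable {p : ℕ} [Fact p.Prime]

private lemma edw_ringchar_ne_two (hp2 : p ≠ 2) : ringChar (ZMod p) ≠ 2 := by
  rw [ZMod.ringChar_zmod_n]; exact hp2

private lemma edw_qc_abs_le (a : ZMod p) : |quadraticChar (ZMod p) a| ≤ 1 := by
  by_cases h : a = 0
  · simp [h]
  · rcases quadraticChar_dichotomy h with h' | h' <;> simp [h']

private lemma edw_qc_inv {a : ZMod p} (ha : a ≠ 0) :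
    quadraticChar (ZMod p) a⁻¹ = quadraticChar (ZMod p) a := by
  have h1 : quadraticChar (ZMod p) a⁻¹ * quadraticChar (ZMod p) a = 1 := by
    rw [← map_mul, inv_mul_cancel₀ ha, map_one]
  rcases quadraticChar_dichotomy ha with h | h <;>
    rcases quadraticChar_dichotomy (inv_ne_zero ha) with h' | h' <;>
    rw [h, h'] at h1 ⊢ <;> omega

private lemma edw_sum_pow_zmod {k : ℕ} (hk : k ≠ 0) :
    ∑ y : ZMod p, y ^ k = if (p - 1) ∣ k then -1 else 0 := by
  classical
  have hu := FiniteField.sum_pow_units (ZMod p) k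
  rw [ZMod.card] at hu
  rw [← hu]
  have h0 : ∑ y : ZMod p, y ^ k = ∑ y ∈ univ.filter (· ≠ 0), y ^ k := by
    rw [Finset.sum_filter_of_ne]
    intro x _ hx
    intro h; rw [h] at hx; simp [zero_pow hk] at hx
  have h1 : ∑ y ∈ univ.filter (· ≠ 0), y ^ k
      = ∑ y : {y : ZMod p // y ≠ 0}, (y : ZMod p) ^ k :=
    Finset.sum_subtype (univ.filter (· ≠ 0)) (by simp) (fun y => y ^ k)
  rw [h0, h1, ← Equiv.sum_comp (unitsEquivNeZero (G₀ := ZMod p)) (fun a => (a : ZMod p) ^ k)]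
  rfl

private lemma edw_count_sq (hp2 : p ≠ 2) (t : ZMod p) :
    (Fintype.card {x : ZMod p // x ^ 2 = t} : ℤ) = quadraticChar (ZMod p) t + 1 := by
  classical
  have h := quadraticChar_card_sqrts (edw_ringchar_ne_two hp2) t
  rw [← h, Set.toFinset_card]
  norm_cast

private lemma edw_count_aux (hp2 : p ≠ 2) (c e : ZMod p) (h : c = 0 → e ≠ 0) :
    (Fintype.card {b : ZMod p // b ^ 2 * c = e} : ℤ)
      = 1 + quadraticChar (ZMod p) (c * e) - (if c = 0 then 1 else 0) := by
  classical
  by_cases hc : c = 0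
  · have : IsEmpty {b : ZMod p // b ^ 2 * c = e} := by
      constructor
      rintro ⟨b, hb⟩
      rw [hc, mul_zero] at hb
      exact h hc hb.symm
    rw [Fintype.card_eq_zero]
    simp [hc]
  · have he : {b : ZMod p // b ^ 2 * c = e} ≃ {b : ZMod p // b ^ 2 = e * c⁻¹} :=
      Equiv.subtypeEquivRight (fun b => by rw [eq_mul_inv_iff_mul_eq₀ hc])
    rw [Fintype.card_congr he, edw_count_sq hp2]
    have hq : quadraticChar (ZMod p) (c * e) = quadraticChar (ZMod p) (e * c⁻¹) := by
      have hce : c * e = (e * c⁻¹) * c ^ 2 := by field_simp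
      rw [hce, map_mul, quadraticChar_sq_one' hc, mul_one]
    rw [hq]
    simp [hc]
    ring

private lemma edw_formula (hp2 : p ≠ 2) {d : ZMod p} (hd0 : d ≠ 0) (hd1 : d ≠ 1) :
    (edwardsCard p d : ℤ) = p - 1 - quadraticChar (ZMod p) d⁻¹
      + ∑ y : ZMod p, quadraticChar (ZMod p) ((1 - y ^ 2) * (1 - d * y ^ 2)) := by
  classical
  rw [edwardsCard, Nat.card_eq_fintype_card,
    Fintype.card_congr (Equiv.subtypeProdEquivSigmaSubtype
      (fun a b : ZMod p => a ^ 2 + b ^ 2 = 1 + d * a ^ 2 * b ^ 2)),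
    Fintype.card_sigma]
  push_cast
  have hterm : ∀ a : ZMod p, (Fintype.card {b : ZMod p // a ^ 2 + b ^ 2 = 1 + d * a ^ 2 * b ^ 2} : ℤ)
      = 1 + quadraticChar (ZMod p) ((1 - a ^ 2) * (1 - d * a ^ 2))
        - (if 1 - d * a ^ 2 = 0 then 1 else 0) := by
    intro a
    have he : {b : ZMod p // a ^ 2 + b ^ 2 = 1 + d * a ^ 2 * b ^ 2}
        ≃ {b : ZMod p // b ^ 2 * (1 - d * a ^ 2) = 1 - a ^ 2} :=
      Equiv.subtypeEquivRight (fun b => by constructor <;> intro h <;> linear_combination h)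
    rw [Fintype.card_congr he, edw_count_aux hp2 _ _ ?_, mul_comm (1 - d * a ^ 2)]
    intro h h2
    apply hd1
    have ha2 : a ^ 2 = 1 := by linear_combination -h2
    have : d * a ^ 2 = 1 := by linear_combination -h
    rw [ha2, mul_one] at this
    exact this
  rw [Finset.sum_congr rfl (fun a _ => hterm a)]
  rw [Finset.sum_sub_distrib, Finset.sum_add_distrib]
  have h1 : ∑ _a : ZMod p, (1 : ℤ) = p := by
    rw [Finset.sum_const, Finset.card_univ, ZMod.card]; simp
  have h2 : (∑ a : ZMod p, if 1 - d * a ^ 2 = 0 then (1 : ℤ) else 0)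
      = quadraticChar (ZMod p) d⁻¹ + 1 := by
    have hiff : ∀ a : ZMod p, (1 - d * a ^ 2 = 0) ↔ a ^ 2 = d⁻¹ := by
      intro a
      constructor
      · intro h
        field_simp
        linear_combination -h
      · intro h
        rw [h]
        field_simp; ring
    calc (∑ a : ZMod p, if 1 - d * a ^ 2 = 0 then (1 : ℤ) else 0)
        = ∑ a : ZMod p, if a ^ 2 = d⁻¹ then (1 : ℤ) else 0 := by
          refine Finset.sum_congr rfl fun a _ => by rw [if_congr (hiff a) rfl rfl]
      _ = ((univ.filter (fun a : ZMod p => a ^ 2 = d⁻¹)).card : ℤ) := by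
          rw [Finset.sum_boole]
      _ = (Fintype.card {a : ZMod p // a ^ 2 = d⁻¹} : ℤ) := by
          rw [Fintype.card_subtype]
      _ = quadraticChar (ZMod p) d⁻¹ + 1 := edw_count_sq hp2 _
  rw [h1, h2]
  ring

private lemma edw_S_inv {d : ZMod p} (hd0 : d ≠ 0) :
    ∑ y : ZMod p, quadraticChar (ZMod p) ((1 - y ^ 2) * (1 - d⁻¹ * y ^ 2))
      = 1 + quadraticChar (ZMod p) d *
          (∑ y : ZMod p, quadraticChar (ZMod p) ((1 - y ^ 2) * (1 - d * y ^ 2)))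
        - quadraticChar (ZMod p) d := by
  classical
  have hpoint : ∀ y : ZMod p, quadraticChar (ZMod p) ((1 - y ^ 2) * (1 - d⁻¹ * y ^ 2))
      = quadraticChar (ZMod p) d * quadraticChar (ZMod p) ((1 - y ^ 2) * (d - y ^ 2)) := by
    intro y
    have hy : (1 - y ^ 2) * (1 - d⁻¹ * y ^ 2) = d⁻¹ * ((1 - y ^ 2) * (d - y ^ 2)) := by
      field_simp
    rw [hy, map_mul, edw_qc_inv hd0]
  rw [Finset.sum_congr rfl (fun y _ => hpoint y), ← Finset.mul_sum]
  have hT : ∑ y : ZMod p, quadraticChar (ZMod p) ((1 - y ^ 2) * (d - y ^ 2))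
      = quadraticChar (ZMod p) d
        + ((∑ y : ZMod p, quadraticChar (ZMod p) ((1 - y ^ 2) * (1 - d * y ^ 2))) - 1) := by
    rw [← Finset.sum_erase_add (univ : Finset (ZMod p)) _ (mem_univ (0 : ZMod p)),
      ← Finset.sum_erase_add (univ : Finset (ZMod p))
        (fun y => quadraticChar (ZMod p) ((1 - y ^ 2) * (1 - d * y ^ 2))) (mem_univ (0 : ZMod p))]
    have hre : ∑ y ∈ univ.erase (0 : ZMod p), quadraticChar (ZMod p) ((1 - y ^ 2) * (d - y ^ 2))
        = ∑ y ∈ univ.erase (0 : ZMod p), quadraticChar (ZMod p) ((1 - y ^ 2) * (1 - d * y ^ 2)) := by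
      refine Finset.sum_nbij' (fun y => y⁻¹) (fun y => y⁻¹) ?_ ?_ ?_ ?_ ?_
      · intro a ha
        simp only [mem_erase, mem_univ, and_true] at ha ⊢
        exact inv_ne_zero ha
      · intro a ha
        simp only [mem_erase, mem_univ, and_true] at ha ⊢
        exact inv_ne_zero ha
      · intro a _; exact inv_inv a
      · intro a _; exact inv_inv a
      · intro a ha
        simp only [mem_erase, mem_univ, and_true] at ha
        have key : (1 - (a⁻¹) ^ 2) * (1 - d * (a⁻¹) ^ 2)
            = ((a⁻¹) ^ 2) ^ 2 * ((1 - a ^ 2) * (d - a ^ 2)) := by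
          field_simp; ring
        rw [key, map_mul _ ((a⁻¹ ^ 2) ^ 2) ((1 - a ^ 2) * (d - a ^ 2)),
          quadraticChar_sq_one' (pow_ne_zero 2 (inv_ne_zero ha)), one_mul]
    rw [hre]
    norm_num
    ring
  rw [hT]
  have hsq : quadraticChar (ZMod p) d * quadraticChar (ZMod p) d = 1 := by
    have := quadraticChar_sq_one hd0; rwa [sq] at this
  linear_combination hsq

private lemma edw_S_mod (hp : p % 4 = 3) {d : ZMod p}
    (hss : ∑ j ∈ range ((p - 1) / 2 + 1), (((p - 1) / 2).choose j : ZMod p) ^ 2 * d ^ j = 0) :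
    ((∑ y : ZMod p, quadraticChar (ZMod p) ((1 - y ^ 2) * (1 - d * y ^ 2)) : ℤ) : ZMod p)
      = - d ^ ((p - 1) / 2) := by
  classical
  have hp5 : 3 ≤ p := by
    rcases Nat.lt_or_ge p 3 with h | h
    · interval_cases p <;> omega
    · exact h
  set m := (p - 1) / 2 with hm
  have hm0 : m ≠ 0 := by omega
  have hmodd : m % 2 = 1 := by omega
  have hp1 : p - 1 = 2 * m := by omega
  have hp2 : p ≠ 2 := by omega
  have hcast : ((∑ y : ZMod p, quadraticChar (ZMod p) ((1 - y ^ 2) * (1 - d * y ^ 2)) : ℤ) : ZMod p)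
      = ∑ y : ZMod p, ((1 - y ^ 2) * (1 - d * y ^ 2)) ^ m := by
    push_cast
    refine Finset.sum_congr rfl fun y _ => ?_
    rw [quadraticChar_eq_pow_of_char_ne_two' (edw_ringchar_ne_two hp2)]
    congr 1
    rw [ZMod.card]
    omega
  rw [hcast]
  set a : ℕ → ZMod p := fun i => (m.choose i : ZMod p) * (-1) ^ i with ha
  set b : ℕ → ZMod p := fun j => (m.choose j : ZMod p) * (-1) ^ j * d ^ j with hb
  have hb1 : ∀ y : ZMod p, (1 - y ^ 2) ^ m = ∑ i ∈ range (m + 1), a i * y ^ (2 * i) := by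
    intro y
    have h : (1 : ZMod p) - y ^ 2 = (-(y ^ 2)) + 1 := by ring
    rw [h, add_pow]
    refine Finset.sum_congr rfl fun i _ => ?_
    rw [one_pow, mul_one, neg_pow, ha, pow_mul]
    ring
  have hb2 : ∀ y : ZMod p, (1 - d * y ^ 2) ^ m = ∑ j ∈ range (m + 1), b j * y ^ (2 * j) := by
    intro y
    have h : (1 : ZMod p) - d * y ^ 2 = (-(d * y ^ 2)) + 1 := by ring
    rw [h, add_pow]
    refine Finset.sum_congr rfl fun j _ => ?_
    rw [one_pow, mul_one, neg_pow, mul_pow, hb, pow_mul]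
    ring
  set G : ℕ → ZMod p := fun s => ∑ y : ZMod p, y ^ (2 * s) with hGdef
  have hstep : ∑ y : ZMod p, ((1 - y ^ 2) * (1 - d * y ^ 2)) ^ m
      = ∑ i ∈ range (m + 1), ∑ j ∈ range (m + 1), a i * b j * G (i + j) := by
    have h1 : ∀ y : ZMod p, ((1 - y ^ 2) * (1 - d * y ^ 2)) ^ m
        = ∑ i ∈ range (m + 1), ∑ j ∈ range (m + 1), (a i * b j) * y ^ (2 * (i + j)) := by
      intro y
      rw [mul_pow, hb1 y, hb2 y, Finset.sum_mul_sum]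
      refine Finset.sum_congr rfl fun i _ => Finset.sum_congr rfl fun j _ => by ring
    rw [Finset.sum_congr rfl fun y _ => h1 y]
    rw [Finset.sum_comm]
    refine Finset.sum_congr rfl fun i _ => ?_
    rw [Finset.sum_comm]
    refine Finset.sum_congr rfl fun j _ => ?_
    rw [← Finset.mul_sum]
  rw [hstep]
  have hG : ∀ s : ℕ, s ≤ 2 * m → G s = if s = m ∨ s = 2 * m then -1 else 0 := by
    intro s hs
    by_cases hs0 : s = 0
    · subst hs0
      rw [if_neg (by omega : ¬((0:ℕ) = m ∨ (0:ℕ) = 2 * m))]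
      simp only [hGdef, mul_zero, pow_zero, Finset.sum_const, Finset.card_univ, ZMod.card,
        nsmul_eq_mul, mul_one, ZMod.natCast_self]
    · have h2s : (2 * s) ≠ 0 := by omega
      rw [hGdef]
      simp only
      rw [edw_sum_pow_zmod h2s, hp1]
      have hiff : (2 * m ∣ 2 * s) ↔ (s = m ∨ s = 2 * m) := by
        constructor
        · rintro ⟨c, hc⟩
          have hc' : 2 * s = 2 * (m * c) := by rw [hc]; ring
          have hsc : s = m * c := Nat.eq_of_mul_eq_mul_left (by norm_num) hc'
          have hmc : m * c ≤ 2 * m := by rw [← hsc]; exact hs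
          have hm1 : 1 ≤ m := by omega
          have hc2 : c ≤ 2 := by
            by_contra hcc
            push_neg at hcc
            have h3 : m * 3 ≤ m * c := Nat.mul_le_mul_left m hcc
            nlinarith
          interval_cases c <;> omega
        · rintro (rfl | rfl)
          · exact ⟨1, by ring⟩
          · exact ⟨2, by ring⟩
      by_cases h : s = m ∨ s = 2 * m
      · rw [if_pos (hiff.mpr h), if_pos h]
      · rw [if_neg (fun hdvd => h (hiff.mp hdvd)), if_neg h]
  have hsplit : ∀ i ∈ range (m + 1), ∀ j ∈ range (m + 1),
      a i * b j * G (i + j) = (if j = m - i then -(a i * b j) else 0)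
        + (if i = m ∧ j = m then -(a i * b j) else 0) := by
    intro i hi j hj
    rw [mem_range] at hi hj
    rw [hG (i + j) (by omega)]
    by_cases h1 : j = m - i
    · have hij : i + j = m := by omega
      have h2 : ¬(i = m ∧ j = m) := by omega
      rw [if_pos (Or.inl hij), if_pos h1, if_neg h2]
      ring
    · by_cases h2 : i = m ∧ j = m
      · have hij : i + j = 2 * m := by omega
        rw [if_pos (Or.inr hij), if_neg h1, if_pos h2]
        ring
      · have h3 : ¬(i + j = m ∨ i + j = 2 * m) := by omega
        rw [if_neg h3, if_neg h1, if_neg h2]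
        ring
  rw [Finset.sum_congr rfl fun i hi => Finset.sum_congr rfl fun j hj => hsplit i hi j hj]
  simp only [Finset.sum_add_distrib]
  have hfirst : ∑ i ∈ range (m + 1), ∑ j ∈ range (m + 1),
      (if j = m - i then -(a i * b j) else 0) = 0 := by
    have hinner : ∀ i ∈ range (m + 1),
        (∑ j ∈ range (m + 1), if j = m - i then -(a i * b j) else 0) = -(a i * b (m - i)) := by
      intro i hi
      rw [Finset.sum_ite_eq' (range (m + 1)) (m - i) (fun j => -(a i * b j))]
      rw [if_pos (by rw [mem_range]; omega)]
    rw [Finset.sum_congr rfl hinner]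
    have hterm : ∀ i ∈ range (m + 1),
        -(a i * b (m - i)) = (m.choose i : ZMod p) ^ 2 * d ^ (m - i) := by
      intro i hi
      rw [mem_range] at hi
      have hi' : i ≤ m := by omega
      rw [ha, hb]
      simp only
      rw [Nat.choose_symm hi']
      have hsign : ((-1 : ZMod p)) ^ i * (-1) ^ (m - i) = (-1) ^ m := by
        rw [← pow_add]
        congr 1
        omega
      have : (-1 : ZMod p) ^ m = -1 := by
        rw [← Nat.div_add_mod m 2, hmodd, pow_add, pow_mul]
        simp
      linear_combination (-((m.choose i : ZMod p) ^ 2 * d ^ (m - i))) * hsign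
        + (-((m.choose i : ZMod p) ^ 2 * d ^ (m - i))) * this
    rw [Finset.sum_congr rfl hterm]
    have := Finset.sum_range_reflect (fun j => (m.choose j : ZMod p) ^ 2 * d ^ j) (m + 1)
    simp only [Nat.add_sub_cancel] at this
    calc ∑ i ∈ range (m + 1), (m.choose i : ZMod p) ^ 2 * d ^ (m - i)
        = ∑ i ∈ range (m + 1), (m.choose (m - i) : ZMod p) ^ 2 * d ^ (m - i) := by
          refine Finset.sum_congr rfl fun i hi => ?_
          rw [mem_range] at hi
          rw [Nat.choose_symm (by omega)]
      _ = ∑ j ∈ range (m + 1), (m.choose j : ZMod p) ^ 2 * d ^ j := this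
      _ = 0 := hss
  rw [hfirst, zero_add]
  have hsecond : ∑ i ∈ range (m + 1), ∑ j ∈ range (m + 1),
      (if i = m ∧ j = m then -(a i * b j) else 0) = -(a m * b m) := by
    have hinner : ∀ i ∈ range (m + 1),
        (∑ j ∈ range (m + 1), if i = m ∧ j = m then -(a i * b j) else 0)
          = if i = m then -(a i * b m) else 0 := by
      intro i _
      by_cases hi : i = m
      · subst hi
        simp only [eq_self_iff_true, true_and]
        rw [Finset.sum_ite_eq' (range (m + 1)) m (fun j => -(a m * b j))]
        simp [mem_range]
      · simp [hi]
    rw [Finset.sum_congr rfl hinner]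
    rw [Finset.sum_ite_eq' (range (m + 1)) m (fun i => -(a i * b m))]
    simp [mem_range]
  rw [hsecond]
  have ham : a m = -1 := by
    rw [ha]
    simp only [Nat.choose_self, Nat.cast_one, one_mul]
    rw [← Nat.div_add_mod m 2, hmodd, pow_add, pow_mul]
    simp
  have hbm : b m = -(d ^ m) := by
    rw [hb]
    simp only [Nat.choose_self, Nat.cast_one, one_mul]
    rw [← Nat.div_add_mod m 2, hmodd, pow_add, pow_mul]
    simp
  rw [ham, hbm]
  ring

private lemma edw_S_bound (hp3 : 3 ≤ p) (d : ZMod p) :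
    |∑ y : ZMod p, quadraticChar (ZMod p) ((1 - y ^ 2) * (1 - d * y ^ 2))| ≤ (p : ℤ) - 2 := by
  classical
  set t : ZMod p → ℤ := fun y => quadraticChar (ZMod p) ((1 - y ^ 2) * (1 - d * y ^ 2)) with ht
  have ht1 : t 1 = 0 := by simp [ht]
  have htm1 : t (-1) = 0 := by simp [ht]
  have hne : (-1 : ZMod p) ≠ 1 := by
    intro h
    have h2 : ((2 : ℕ) : ZMod p) = 0 := by push_cast; linear_combination -h
    rw [ZMod.natCast_eq_zero_iff] at h2
    have := Nat.le_of_dvd (by norm_num) h2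
    omega
  have hmem : (-1 : ZMod p) ∈ (univ : Finset (ZMod p)).erase 1 := by
    rw [mem_erase]; exact ⟨hne, mem_univ _⟩
  have hS : ∑ y : ZMod p, t y = ∑ y ∈ ((univ : Finset (ZMod p)).erase 1).erase (-1), t y := by
    rw [Finset.sum_erase _ htm1, Finset.sum_erase _ ht1]
  rw [hS]
  have hcard : (((univ : Finset (ZMod p)).erase 1).erase (-1)).card = p - 2 := by
    rw [Finset.card_erase_of_mem hmem, Finset.card_erase_of_mem (mem_univ _),
      Finset.card_univ, ZMod.card]
    omega
  calc |∑ y ∈ ((univ : Finset (ZMod p)).erase 1).erase (-1), t y|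
      ≤ ∑ y ∈ ((univ : Finset (ZMod p)).erase 1).erase (-1), |t y| :=
        Finset.abs_sum_le_sum_abs _ _
    _ ≤ (((univ : Finset (ZMod p)).erase 1).erase (-1)).card • (1 : ℤ) :=
        Finset.sum_le_card_nsmul _ _ 1 (fun x _ => edw_qc_abs_le _)
    _ = ((p : ℤ) - 2) := by
        rw [hcard, nsmul_eq_mul, mul_one]
        have : ((p - 2 : ℕ) : ℤ) = (p : ℤ) - 2 := by omega
        exact this

end Aux

theorem stmt1 (p : ℕ) [Fact p.Prime] (hp : p % 4 = 3) (d : ZMod p)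
    (hd0 : d ≠ 0) (hd1 : d ≠ 1)
    (hss : ∑ j ∈ range ((p - 1) / 2 + 1),
      (((p - 1) / 2).choose j : ZMod p) ^ 2 * d ^ j = 0) :
    edwardsCard p d = edwardsCard p d⁻¹ := by
  classical
  have hp3 : 3 ≤ p := by
    rcases Nat.lt_or_ge p 3 with h | h
    · interval_cases p <;> omega
    · exact h
  have hp2 : p ≠ 2 := by omega
  have hd0' : d⁻¹ ≠ 0 := inv_ne_zero hd0
  have hd1' : d⁻¹ ≠ 1 := by rw [Ne, inv_eq_one]; exact hd1
  set S : ℤ := ∑ y : ZMod p, quadraticChar (ZMod p) ((1 - y ^ 2) * (1 - d * y ^ 2)) with hSdef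
  set S' : ℤ := ∑ y : ZMod p, quadraticChar (ZMod p) ((1 - y ^ 2) * (1 - d⁻¹ * y ^ 2)) with hS'def
  have hEd : (edwardsCard p d : ℤ) = p - 1 - quadraticChar (ZMod p) d⁻¹ + S :=
    edw_formula hp2 hd0 hd1
  have hEdi : (edwardsCard p d⁻¹ : ℤ) = p - 1 - quadraticChar (ZMod p) d + S' := by
    have := edw_formula hp2 hd0' hd1'
    rwa [inv_inv] at this
  have hqi : quadraticChar (ZMod p) d⁻¹ = quadraticChar (ZMod p) d := edw_qc_inv hd0
  have hSi : S' = 1 + quadraticChar (ZMod p) d * S - quadraticChar (ZMod p) d :=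
    edw_S_inv hd0
  have key : (edwardsCard p d : ℤ) = (edwardsCard p d⁻¹ : ℤ) := by
    rcases quadraticChar_dichotomy hd0 with hχ | hχ
    · rw [hEd, hEdi, hqi, hSi, hχ]
      ring
    · -- nonsquare case: show S = 1
      have hS1 : S = 1 := by
        have hmod := edw_S_mod hp (d := d) hss
        have hqc : ((quadraticChar (ZMod p) d : ℤ) : ZMod p) = d ^ ((p - 1) / 2) := by
          rw [quadraticChar_eq_pow_of_char_ne_two' (edw_ringchar_ne_two hp2)]
          congr 1
          rw [ZMod.card]
          omega
        rw [hχ] at hqc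
        have hdm : (d : ZMod p) ^ ((p - 1) / 2) = -1 := by
          rw [← hqc]; push_cast; ring
        have hmod1 : ((S : ℤ) : ZMod p) = 1 := by
          rw [hSdef, hmod, hdm]; ring
        have hdvd : (p : ℤ) ∣ S - 1 := by
          rw [← ZMod.intCast_zmod_eq_zero_iff_dvd]
          push_cast
          rw [hmod1]
          ring
        have habs : |S| ≤ (p : ℤ) - 2 := hSdef ▸ edw_S_bound hp3 d
        obtain ⟨k, hk⟩ := hdvd
        have hb := abs_le.mp habs
        have hpz : (3 : ℤ) ≤ (p : ℤ) := by exact_mod_cast hp3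
        rcases lt_trichotomy k 0 with h | h | h
        · have hk1 : k ≤ -1 := by omega
          nlinarith [hb.1, hb.2]
        · subst h
          simp only [mul_zero] at hk
          omega
        · have hk1 : 1 ≤ k := by omega
          nlinarith [hb.1, hb.2]
      rw [hEd, hEdi, hqi, hSi, hχ, hS1]
      ring
  exact_mod_cast key
end

section
/- Let p be an odd prime and d ∈ F_p with d ≠ 0 and d ≠ 1. Then, as elements of F_p, N_d ≡ (−1)^{(p+1)/2} · Σ_{j=0}^{(p−1)/2} binom((p−1)/2, j)² · d^j − 1 − 2·χ(d) (mod p). -/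
open Finset

lemma sum_pow_zmod (p : ℕ) [Fact p.Prime] (k : ℕ) :
    ∑ x : ZMod p, x ^ k = if k ≠ 0 ∧ (p - 1) ∣ k then -1 else 0 := by
  classical
  rcases eq_or_ne k 0 with rfl | hk
  · simp [Finset.card_univ, ZMod.natCast_self, ZMod.card]
  · have hcard : Fintype.card (ZMod p) = p := ZMod.card p
    let φ : (ZMod p)ˣ ↪ ZMod p := ⟨fun x ↦ x, fun _ _ h => Units.ext h⟩
    have huniv : univ.map φ = univ \ {0} := by
      ext x
      simp only [mem_map, mem_univ, Function.Embedding.coeFn_mk, true_and, mem_sdiff,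
        mem_singleton, φ]
      exact isUnit_iff_ne_zero
    have : ∑ x : ZMod p, x ^ k = ∑ x : (ZMod p)ˣ, (x : ZMod p) ^ k := by
      calc ∑ x : ZMod p, x ^ k = ∑ x ∈ univ \ {(0 : ZMod p)}, x ^ k := by
            rw [← Finset.sum_sdiff ({0} : Finset (ZMod p)).subset_univ, sum_singleton,
              zero_pow hk, add_zero]
        _ = ∑ x : (ZMod p)ˣ, (x : ZMod p) ^ k := by simp [φ, ← huniv, univ.sum_map φ]; rfl
    rw [this, FiniteField.sum_pow_units (ZMod p) k, hcard]
    simp [hk]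

lemma sq_count (p : ℕ) [Fact p.Prime] (hp : p ≠ 2) (c : ZMod p) :
    (((univ.filter fun y : ZMod p => y ^ 2 = c).card : ℤ) : ZMod p) = 1 + c ^ (p / 2) := by
  classical
  have h := legendreSym.card_sqrts p hp (c.val : ℤ)
  have hc : (((c.val : ℤ) : ZMod p)) = c := by push_cast; simp [ZMod.natCast_val, ZMod.cast_id]
  rw [hc] at h
  have hset : {x : ZMod p | x ^ 2 = c}.toFinset = univ.filter fun y : ZMod p => y ^ 2 = c := by
    ext y; simp
  rw [hset] at h
  have := congrArg (fun z : ℤ => (z : ZMod p)) h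
  rw [this]
  push_cast
  rw [legendreSym.eq_pow, hc]
  ring

lemma sqa_count (p : ℕ) [Fact p.Prime] (hp : p ≠ 2) (a b : ZMod p) (ha : a ≠ 0) :
    (((univ.filter fun y : ZMod p => y ^ 2 * a = b).card : ℤ) : ZMod p)
      = 1 + (b * a) ^ (p / 2) := by
  classical
  have hcond : ∀ y : ZMod p, (y ^ 2 * a = b) ↔ (y ^ 2 = b * a⁻¹) := by
    intro y
    constructor
    · intro h; field_simp [ha]; linear_combination h
    · intro h; field_simp [ha] at h; linear_combination h
  have : (univ.filter fun y : ZMod p => y ^ 2 * a = b) =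
      (univ.filter fun y : ZMod p => y ^ 2 = b * a⁻¹) := by
    apply Finset.filter_congr; intro y _; exact hcond y
  rw [this, sq_count p hp]
  congr 1
  have h2 : a ^ (p - 1) = 1 := ZMod.pow_card_sub_one_eq_one ha
  have hps : p - 1 = 2 * (p / 2) := by
    have := (Fact.out : p.Prime).two_le
    obtain ⟨t, ht⟩ : Odd p := (Fact.out : p.Prime).odd_of_ne_two hp
    omega
  have h3 : a ^ (2 * (p / 2)) = 1 := by rw [← hps]; exact h2
  have hainv : a⁻¹ ^ (p / 2) = a ^ (p / 2) := by
    have hane : a ^ (p / 2) ≠ 0 := pow_ne_zero _ ha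
    field_simp
    rw [one_div, inv_pow]; exact inv_eq_of_mul_eq_one_right (by rw [← pow_add, ← two_mul, h3])
  rw [mul_pow, mul_pow, hainv]

theorem stmt6 (p : ℕ) [Fact p.Prime] (hp : p ≠ 2) (d : ZMod p)
    (hd0 : d ≠ 0) (hd1 : d ≠ 1) :
    (edwardsCard p d : ZMod p) =
      (-1 : ZMod p) ^ ((p + 1) / 2) *
        (∑ j ∈ range ((p - 1) / 2 + 1),
          (((p - 1) / 2).choose j : ZMod p) ^ 2 * d ^ j)
      - 1 - 2 * ((legendreSym p (d.val : ℤ) : ℤ) : ZMod p) := by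
  classical
  obtain ⟨t, ht⟩ : Odd p := (Fact.out : p.Prime).odd_of_ne_two hp
  have hple := (Fact.out : p.Prime).two_le
  set m := p / 2 with hm
  have hm1 : (p - 1) / 2 = m := by omega
  have hm2 : p - 1 = 2 * m := by omega
  have hm3 : (p + 1) / 2 = m + 1 := by omega
  have hm0 : m ≠ 0 := by omega
  -- Step 1: reduce to counting square roots fiberwise
  have step1 : (edwardsCard p d : ZMod p) =
      ∑ x : ZMod p,
        (((univ.filter fun y : ZMod p =>
            y ^ 2 * (1 - d * x ^ 2) = 1 - x ^ 2).card : ℤ) : ZMod p) := by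
    have h : edwardsCard p d =
        ∑ x : ZMod p,
          (univ.filter fun y : ZMod p => y ^ 2 * (1 - d * x ^ 2) = 1 - x ^ 2).card := by
      rw [edwardsCard, Nat.card_eq_fintype_card, Fintype.card_subtype,
        Finset.card_filter, Fintype.sum_prod_type]
      refine Finset.sum_congr rfl fun x _ => ?_
      rw [Finset.card_filter]
      refine Finset.sum_congr rfl fun y _ => ?_
      exact if_congr (by constructor <;> intro h <;> linear_combination h) rfl rfl
    rw [h]
    push_cast
    rfl
  -- Step 2: per-fiber count
  have key : ∀ x : ZMod p,
      (((univ.filter fun y : ZMod p =>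
          y ^ 2 * (1 - d * x ^ 2) = 1 - x ^ 2).card : ℤ) : ZMod p)
        = 1 + ((1 - x ^ 2) * (1 - d * x ^ 2)) ^ m
            - (if d * x ^ 2 = 1 then 1 else 0) := by
    intro x
    by_cases hA : (1 : ZMod p) - d * x ^ 2 = 0
    · have hd1' : d * x ^ 2 = 1 := by linear_combination -hA
      have hB : (1 : ZMod p) - x ^ 2 ≠ 0 := by
        intro hB
        have hx2 : x ^ 2 = 1 := by linear_combination -hB
        rw [hx2, mul_one] at hd1'
        exact hd1 hd1'
      have hempty : (univ.filter fun y : ZMod p =>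
          y ^ 2 * (1 - d * x ^ 2) = 1 - x ^ 2) = ∅ := by
        rw [Finset.filter_eq_empty_iff]
        intro y _
        rw [hA, mul_zero]
        exact fun h => hB h.symm
      rw [hempty, hA, mul_zero, zero_pow hm0, if_pos hd1']
      simp
    · rw [sqa_count p hp _ _ hA]
      have hne : d * x ^ 2 ≠ 1 := fun h => hA (by rw [h]; ring)
      rw [if_neg hne, ← hm, sub_zero]
  rw [step1]
  rw [Finset.sum_congr rfl fun x _ => key x]
  -- split the sum
  rw [Finset.sum_sub_distrib, Finset.sum_add_distrib]
  have hsum1 : ∑ _x : ZMod p, (1 : ZMod p) = 0 := by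
    simp [Finset.card_univ, ZMod.card, ZMod.natCast_self]
  have hite : ∑ x : ZMod p, (if d * x ^ 2 = 1 then (1 : ZMod p) else 0) = 1 + d ^ m := by
    have e1 : (((univ.filter fun x : ZMod p => x ^ 2 * d = 1).card : ℤ) : ZMod p)
        = ∑ x : ZMod p, (if d * x ^ 2 = 1 then (1 : ZMod p) else 0) := by
      rw [Finset.card_filter]
      push_cast
      refine Finset.sum_congr rfl fun x _ => ?_
      exact if_congr (by rw [mul_comm]) rfl rfl
    rw [← e1, sqa_count p hp d 1 hd0, one_mul, ← hm]
  -- Step 3: evaluate the main character sum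
  have expand : ∑ x : ZMod p, ((1 - x ^ 2) * (1 - d * x ^ 2)) ^ m
      = (-1 : ZMod p) ^ (m + 1) *
          (∑ j ∈ range (m + 1), (m.choose j : ZMod p) ^ 2 * d ^ j) - d ^ m := by
    have e1 : ∀ x : ZMod p, ((1 - x ^ 2) * (1 - d * x ^ 2)) ^ m =
        ∑ i ∈ range (m + 1), ∑ j ∈ range (m + 1),
          ((m.choose i : ZMod p) * (m.choose j) * (-1) ^ (i + j) * d ^ j)
            * x ^ (2 * (i + j)) := by
      intro x
      have h1 : (1 - x ^ 2 : ZMod p) ^ m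
          = ∑ i ∈ range (m + 1), (m.choose i : ZMod p) * (-1) ^ i * x ^ (2 * i) := by
        rw [show (1 - x ^ 2 : ZMod p) = (-x ^ 2) + 1 by ring, add_pow]
        refine Finset.sum_congr rfl fun i _ => ?_
        rw [one_pow, neg_pow, ← pow_mul]
        ring
      have h2 : (1 - d * x ^ 2 : ZMod p) ^ m
          = ∑ j ∈ range (m + 1), (m.choose j : ZMod p) * (-1) ^ j * d ^ j * x ^ (2 * j) := by
        rw [show (1 - d * x ^ 2 : ZMod p) = (-(d * x ^ 2)) + 1 by ring, add_pow]
        refine Finset.sum_congr rfl fun j _ => ?_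
        rw [one_pow, neg_pow, mul_pow, ← pow_mul]
        ring
      rw [mul_pow, h1, h2, Finset.sum_mul_sum]
      refine Finset.sum_congr rfl fun i _ => Finset.sum_congr rfl fun j _ => ?_
      rw [pow_add ((-1 : ZMod p)) i j, mul_add 2 i j, pow_add x]
      ring
    rw [Finset.sum_congr rfl fun x _ => e1 x]
    rw [Finset.sum_comm]
    have e2 : ∀ i ∈ range (m + 1),
        (∑ x : ZMod p, ∑ j ∈ range (m + 1),
          ((m.choose i : ZMod p) * (m.choose j) * (-1) ^ (i + j) * d ^ j)
            * x ^ (2 * (i + j)))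
        = ∑ j ∈ range (m + 1),
          ((m.choose i : ZMod p) * (m.choose j) * (-1) ^ (i + j) * d ^ j)
            * ∑ x : ZMod p, x ^ (2 * (i + j)) := by
      intro i _
      rw [Finset.sum_comm]
      exact Finset.sum_congr rfl fun j _ => by rw [← Finset.mul_sum]
    rw [Finset.sum_congr rfl e2]
    have hS : ∀ i ∈ range (m + 1), ∀ j ∈ range (m + 1),
        (∑ x : ZMod p, x ^ (2 * (i + j)))
          = (if j = m - i then (-1 : ZMod p) else 0)
            + (if j = m then (if i = m then (-1 : ZMod p) else 0) else 0) := by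
      intro i hi j hj
      rw [mem_range] at hi hj
      have hi' : i ≤ m := by omega
      have hj' : j ≤ m := by omega
      rw [sum_pow_zmod, hm2]
      by_cases hB : i + j = m
      · have hcnd : 2 * (i + j) ≠ 0 ∧ 2 * m ∣ 2 * (i + j) := by
          constructor
          · omega
          · exact ⟨1, by omega⟩
        rw [if_pos hcnd, if_pos (by omega)]
        by_cases hjm : j = m
        · rw [if_pos hjm, if_neg (by omega)]; ring
        · rw [if_neg hjm]; ring
      · by_cases hC : i = m ∧ j = m
        · obtain ⟨rfl, rfl⟩ := hC
          have hcnd : 2 * (m + m) ≠ 0 ∧ 2 * m ∣ 2 * (m + m) := by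
            constructor
            · omega
            · exact ⟨2, by ring⟩
          rw [if_pos hcnd, if_neg (by omega), if_pos rfl, if_pos rfl]
          ring
        · have hcnd : ¬(2 * (i + j) ≠ 0 ∧ 2 * m ∣ 2 * (i + j)) := by
            rintro ⟨hne, k, hk⟩
            have hm0' : 1 ≤ m := by omega
            have hk2 : k ≤ 2 := by
              by_contra hgt
              push_neg at hgt
              have h3 : 3 * m ≤ k * m := Nat.mul_le_mul_right m (by omega)
              linarith
            have hor : i + j = m ∨ (i = m ∧ j = m) := by
              interval_cases k
              · omega
              · left; omega
              · right; omega
            tauto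
          rw [if_neg hcnd, if_neg (by omega)]
          by_cases hjm : j = m
          · rw [if_pos hjm, if_neg (by rintro rfl; exact hC ⟨rfl, hjm⟩)]; ring
          · rw [if_neg hjm]; ring
    rw [Finset.sum_congr rfl fun i hi =>
      Finset.sum_congr rfl fun j hj => by rw [hS i hi j hj]]
    simp only [mul_add]
    rw [Finset.sum_congr rfl fun i _ => Finset.sum_add_distrib, Finset.sum_add_distrib]
    -- second piece : collapses to -(d^m)
    have hT2 : (∑ i ∈ range (m + 1), ∑ j ∈ range (m + 1),
        ((m.choose i : ZMod p) * (m.choose j) * (-1) ^ (i + j) * d ^ j)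
          * (if j = m then (if i = m then (-1 : ZMod p) else 0) else 0)) = -(d ^ m) := by
      have inner : ∀ i ∈ range (m + 1), (∑ j ∈ range (m + 1),
          ((m.choose i : ZMod p) * (m.choose j) * (-1) ^ (i + j) * d ^ j)
            * (if j = m then (if i = m then (-1 : ZMod p) else 0) else 0))
          = if i = m then
              -((m.choose i : ZMod p) * (m.choose m) * (-1) ^ (i + m) * d ^ m) else 0 := by
        intro i _
        rw [show (∑ j ∈ range (m + 1),
            ((m.choose i : ZMod p) * (m.choose j) * (-1) ^ (i + j) * d ^ j)
              * (if j = m then (if i = m then (-1 : ZMod p) else 0) else 0))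
          = ∑ j ∈ range (m + 1), (if j = m then
              ((m.choose i : ZMod p) * (m.choose j) * (-1) ^ (i + j) * d ^ j)
                * (if i = m then (-1 : ZMod p) else 0) else 0) from
          Finset.sum_congr rfl fun j _ => by split_ifs <;> ring]
        rw [Finset.sum_ite_eq' (range (m + 1)) m, if_pos (by simp)]
        split_ifs <;> ring
      rw [Finset.sum_congr rfl inner, Finset.sum_ite_eq' (range (m + 1)) m,
        if_pos (by simp), Nat.choose_self]
      have : ((-1 : ZMod p)) ^ (m + m) = 1 := by
        rw [← two_mul, pow_mul, neg_one_sq, one_pow]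
      rw [this]
      push_cast
      ring
    -- first piece
    have hT1 : (∑ i ∈ range (m + 1), ∑ j ∈ range (m + 1),
        ((m.choose i : ZMod p) * (m.choose j) * (-1) ^ (i + j) * d ^ j)
          * (if j = m - i then (-1 : ZMod p) else 0))
        = (-1 : ZMod p) ^ (m + 1) *
            ∑ j ∈ range (m + 1), (m.choose j : ZMod p) ^ 2 * d ^ j := by
      have inner : ∀ i ∈ range (m + 1), (∑ j ∈ range (m + 1),
          ((m.choose i : ZMod p) * (m.choose j) * (-1) ^ (i + j) * d ^ j)
            * (if j = m - i then (-1 : ZMod p) else 0))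
          = -((m.choose i : ZMod p) * (m.choose (m - i)) * (-1) ^ (i + (m - i))
              * d ^ (m - i)) := by
        intro i hi
        rw [mem_range] at hi
        rw [show (∑ j ∈ range (m + 1),
            ((m.choose i : ZMod p) * (m.choose j) * (-1) ^ (i + j) * d ^ j)
              * (if j = m - i then (-1 : ZMod p) else 0))
          = ∑ j ∈ range (m + 1), (if j = m - i then
              -((m.choose i : ZMod p) * (m.choose j) * (-1) ^ (i + j) * d ^ j) else 0) from
          Finset.sum_congr rfl fun j _ => by split_ifs <;> ring]
        rw [Finset.sum_ite_eq' (range (m + 1)) (m - i), if_pos (by simp)]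
      rw [Finset.sum_congr rfl inner]
      have step : ∀ i ∈ range (m + 1),
          -((m.choose i : ZMod p) * (m.choose (m - i)) * (-1) ^ (i + (m - i)) * d ^ (m - i))
          = (-1 : ZMod p) ^ (m + 1) * ((m.choose (m - i) : ZMod p) ^ 2 * d ^ (m - i)) := by
        intro i hi
        rw [mem_range] at hi
        have hii : i ≤ m := by omega
        rw [Nat.choose_symm hii, show i + (m - i) = m by omega, pow_succ]
        ring
      rw [Finset.sum_congr rfl step, ← Finset.mul_sum]
      congr 1
      have := Finset.sum_range_reflect
        (fun j => (m.choose j : ZMod p) ^ 2 * d ^ j) (m + 1)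
      simpa using this
    rw [hT1, hT2]
    ring
  rw [hsum1, hite, expand, hm1, hm3]
  have hleg : ((legendreSym p (d.val : ℤ) : ℤ) : ZMod p) = d ^ m := by
    rw [legendreSym.eq_pow, ← hm]
    congr 1
    push_cast
    simp [ZMod.natCast_val, ZMod.cast_id]
  rw [hleg]
  ring
end
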